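/- Let r ≥ 2 and n ≥ 4. In the balanced complete r-partite graph K_{n,…,n} on rn vertices, the number of subsets S ⊆ V(G) such that G[S] contains a K_r-factor equals Σ_{k=0}^{n} binom(n,k)^r, and this is at most n·2^{rn}/(πn/2)^{r/2} + 1, hence o(2^{rn}) as n → ∞ for fixed r. -/

import Mathlib

/-- `G[S]` contains a `K_r`-factor. -/
def krFactorOn (r : ℕ) {V : Type*} [DecidableEq V] (G : SimpleGraph V) (S : Finset V) : Prop :=
  ∃ P : Finset (Finset V),
    (∀ T ∈ P, T.card = r ∧ T ⊆ S ∧ ∀ x ∈ T, ∀ y ∈ T, x ≠ y → G.Adj x y) ∧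
    (∀ T ∈ P, ∀ T' ∈ P, T ≠ T' → Disjoint T T') ∧
    (∀ v ∈ S, ∃ T ∈ P, v ∈ T)

section analytic


noncomputable def cbSeq (m : ℕ) : ℝ := (Nat.centralBinom m : ℝ) * Real.sqrt m / 4 ^ m

lemma cbSeq_eq (m : ℕ) (hm : 1 ≤ m) :
    cbSeq m = Stirling.stirlingSeq (2 * m) / (Stirling.stirlingSeq m) ^ 2 := by
  have hm0 : (0:ℝ) < (m:ℝ) := by exact_mod_cast hm
  have he : (0:ℝ) < Real.exp 1 := Real.exp_pos 1
  have hs : Real.sqrt (m:ℝ) ^ 2 = (m:ℝ) := Real.sq_sqrt hm0.le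
  have hspos : (0:ℝ) < Real.sqrt m := Real.sqrt_pos.mpr hm0
  have h2m : Real.sqrt (2 * (2*m:ℕ) : ℝ) = 2 * Real.sqrt m := by
    push_cast
    rw [show (2:ℝ) * (2*(m:ℝ)) = 4 * m by ring, Real.sqrt_mul (by norm_num) ,
      show (4:ℝ) = 2^2 by norm_num, Real.sqrt_sq (by norm_num)]
  have hsm : Real.sqrt (2 * (m:ℕ) : ℝ) ^ 2 = 2 * m := Real.sq_sqrt (by positivity)
  have hcb : ((2*m).factorial : ℝ) = (Nat.centralBinom m : ℝ) * m.factorial * m.factorial := by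
    have h := Nat.choose_mul_factorial_mul_factorial (show m ≤ 2*m by omega)
    rw [show 2*m-m = m by omega] at h
    rw [Nat.centralBinom]
    exact_mod_cast h.symm
  unfold Stirling.stirlingSeq cbSeq
  rw [h2m, hcb]
  have hpow : ((2*m : ℕ) / Real.exp 1 : ℝ) ^ (2*m) = 4 ^ m * ((m / Real.exp 1 : ℝ))^(2*m) := by
    push_cast
    rw [show ((2:ℝ)*m/Real.exp 1) = 2 * (m / Real.exp 1) by ring, mul_pow,
      pow_mul, show (2:ℝ)^2 = 4 by norm_num]
  rw [hpow]
  have hfm : (0:ℝ) < (m.factorial : ℝ) := by exact_mod_cast m.factorial_pos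
  have hme : (0:ℝ) < ((m:ℝ) / Real.exp 1) ^ (2*m) := by positivity
  have hexp : Real.exp ((m:ℝ) * 2) = Real.exp (m:ℝ) ^ 2 := by
    rw [show ((m:ℝ)*2) = m + m by ring, Real.exp_add, sq]
  have h22 : Real.sqrt 2 ^ 2 = 2 := Real.sq_sqrt (by norm_num)
  field_simp
  ring_nf
  rw [hs, Real.sq_sqrt (by positivity : (0:ℝ) ≤ (m:ℝ) * 2)]
  ring

lemma cbSeq_mono : Monotone cbSeq := by
  apply monotone_nat_of_le_succ
  intro m
  rcases Nat.eq_zero_or_pos m with h0 | hm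
  · subst h0
    simp [cbSeq]
    positivity
  · have hm0 : (0:ℝ) < (m:ℝ) := by exact_mod_cast hm
    have hN := Nat.succ_mul_centralBinom_succ m
    have hrec : ((m:ℝ)+1) * (Nat.centralBinom (m+1) : ℝ)
        = 2*(2*(m:ℝ)+1) * Nat.centralBinom m := by exact_mod_cast hN
    have hcbpos : (0:ℝ) < (Nat.centralBinom m : ℝ) := by
      exact_mod_cast Nat.centralBinom_pos m
    have hkey : 2 * ((m:ℝ)+1) * Real.sqrt m ≤ (2*m+1) * Real.sqrt ((m:ℝ)+1) := by
      rw [show 2 * ((m:ℝ)+1) * Real.sqrt m = Real.sqrt ((2*((m:ℝ)+1))^2 * m) by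
            rw [Real.sqrt_mul (by positivity), Real.sqrt_sq (by positivity)],
          show ((2*(m:ℝ)+1)) * Real.sqrt ((m:ℝ)+1) = Real.sqrt ((2*(m:ℝ)+1)^2 * ((m:ℝ)+1)) by
            rw [Real.sqrt_mul (by positivity), Real.sqrt_sq (by positivity)]]
      apply Real.sqrt_le_sqrt
      nlinarith [hm0]
    unfold cbSeq
    rw [div_le_div_iff₀ (by positivity) (by positivity)]
    have key : (Nat.centralBinom m:ℝ) * Real.sqrt m * 4^(m+1) * ((m:ℝ)+1)
        ≤ (Nat.centralBinom (m+1):ℝ) * Real.sqrt ((m:ℝ)+1) * 4^m * ((m:ℝ)+1) := by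
      calc (Nat.centralBinom m:ℝ) * Real.sqrt m * 4^(m+1) * ((m:ℝ)+1)
          = (Nat.centralBinom m:ℝ) * (2*((m:ℝ)+1) * Real.sqrt m) * (2*4^m) := by ring
        _ ≤ (Nat.centralBinom m:ℝ) * ((2*(m:ℝ)+1) * Real.sqrt ((m:ℝ)+1)) * (2*4^m) := by
            have := mul_le_mul_of_nonneg_left hkey hcbpos.le
            nlinarith [this, pow_pos (show (0:ℝ)<4 by norm_num) m]
        _ = (2*(2*(m:ℝ)+1) * Nat.centralBinom m) * Real.sqrt ((m:ℝ)+1) * 4^m := by ring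
        _ = (((m:ℝ)+1) * Nat.centralBinom (m+1)) * Real.sqrt ((m:ℝ)+1) * 4^m := by rw [hrec]
        _ = (Nat.centralBinom (m+1):ℝ) * Real.sqrt ((m:ℝ)+1) * 4^m * ((m:ℝ)+1) := by ring
    have := le_of_mul_le_mul_right key (by positivity : (0:ℝ) < (m:ℝ)+1)
    push_cast
    push_cast at this
    linarith

lemma cbSeq_tendsto : Filter.Tendsto cbSeq Filter.atTop (nhds (Real.sqrt Real.pi / Real.pi)) := by
  have h1 : Filter.Tendsto (fun m : ℕ => Stirling.stirlingSeq (2*m) / (Stirling.stirlingSeq m)^2)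
      Filter.atTop (nhds (Real.sqrt Real.pi / Real.pi)) := by
    have ht : Filter.Tendsto (fun m : ℕ => 2*m) Filter.atTop Filter.atTop :=
      Filter.tendsto_atTop_atTop.mpr (fun b => ⟨b, fun a ha => by omega⟩)
    have hnum := (Stirling.tendsto_stirlingSeq_sqrt_pi).comp ht
    have hden := ((Stirling.tendsto_stirlingSeq_sqrt_pi).pow 2)
    have := hnum.div hden (by
      rw [Real.sq_sqrt Real.pi_pos.le]
      exact Real.pi_ne_zero)
    simpa [Real.sq_sqrt Real.pi_pos.le, Pi.div_def, Function.comp_def] using this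
  apply h1.congr'
  filter_upwards [Filter.eventually_ge_atTop 1] with m hm
  exact (cbSeq_eq m hm).symm

lemma centralBinom_sqrt_le (m : ℕ) :
    (Nat.centralBinom m : ℝ) * Real.sqrt (Real.pi * m) ≤ 4 ^ m := by
  have h := cbSeq_mono.ge_of_tendsto cbSeq_tendsto m
  unfold cbSeq at h
  have hπ : (0:ℝ) < Real.pi := Real.pi_pos
  have hπs : Real.sqrt Real.pi * Real.sqrt Real.pi = Real.pi := Real.mul_self_sqrt hπ.le
  have h3 : (Nat.centralBinom m:ℝ) * Real.sqrt m ≤ Real.sqrt Real.pi / Real.pi * 4^m := by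
    rw [div_le_iff₀ (by positivity)] at h
    linarith
  rw [Real.sqrt_mul hπ.le]
  calc (Nat.centralBinom m : ℝ) * (Real.sqrt Real.pi * Real.sqrt m)
      = Real.sqrt Real.pi * ((Nat.centralBinom m:ℝ) * Real.sqrt m) := by ring
    _ ≤ Real.sqrt Real.pi * (Real.sqrt Real.pi / Real.pi * 4^m) :=
        mul_le_mul_of_nonneg_left h3 (Real.sqrt_nonneg _)
    _ = (Real.sqrt Real.pi * Real.sqrt Real.pi) * 4^m / Real.pi := by ring
    _ = 4^m := by rw [hπs]; field_simp

lemma choose_sqrt_le (n : ℕ) (hn : 2 ≤ n) (k : ℕ) :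
    (n.choose k : ℝ) * Real.sqrt (Real.pi * n / 2) ≤ 2 ^ n := by
  have hmid : (n.choose k : ℝ) ≤ (n.choose (n/2) : ℝ) := by
    exact_mod_cast Nat.choose_le_middle k n
  have hX : (0:ℝ) ≤ Real.sqrt (Real.pi * n / 2) := Real.sqrt_nonneg _
  have step : ((n.choose (n/2) : ℝ)) * Real.sqrt (Real.pi * n / 2) ≤ 2^n := by
    rcases Nat.even_or_odd n with ⟨m, hm⟩ | ⟨m, hm⟩
    · -- n = 2m
      subst hm
      have hm1 : 1 ≤ m := by omega
      have h2 : (m + m)/2 = m := by omega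
      rw [h2]
      have : (m+m).choose m = Nat.centralBinom m := by
        rw [Nat.centralBinom, two_mul]
      rw [this]
      have hx : Real.pi * (↑(m+m)) / 2 = Real.pi * m := by push_cast; ring
      rw [hx]
      calc (Nat.centralBinom m : ℝ) * Real.sqrt (Real.pi * m) ≤ 4^m :=
            centralBinom_sqrt_le m
        _ = 2^(m+m) := by rw [show (4:ℝ) = 2^2 by norm_num, ← pow_mul]; ring_nf
    · -- n = 2m+1
      subst hm
      have hm1 : 1 ≤ m := by omega
      have hm0 : (1:ℝ) ≤ (m:ℝ) := by exact_mod_cast hm1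
      have h2 : (2*m+1)/2 = m := by omega
      rw [h2]
      have hNmid : (m+1) * ((2*m+1).choose m) = (2*m+1) * Nat.centralBinom m := by
        have h1 := Nat.add_one_mul_choose_eq (2*m) m
        have h3 : (2*m+1).choose m = (2*m+1).choose (m+1) := by
          have := Nat.choose_symm (show m+1 ≤ 2*m+1 by omega)
          rw [show 2*m+1-(m+1) = m by omega] at this
          exact this
        rw [h3, Nat.centralBinom]
        calc (m+1) * (2*m+1).choose (m+1) = (2*m+1).choose (m+1) * (m+1) := by ring
          _ = Nat.succ (2*m) * (2*m).choose m := (h1).symm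
          _ = (2*m+1) * (2*m).choose m := by rfl
      have hR : ((m:ℝ)+1) * ((2*m+1).choose m : ℝ) = (2*(m:ℝ)+1) * Nat.centralBinom m := by
        exact_mod_cast hNmid
      have hsq : (2*(m:ℝ)+1) * Real.sqrt (Real.pi * (↑(2*m+1)) / 2)
          ≤ 2*((m:ℝ)+1) * Real.sqrt (Real.pi * m) := by
        have hb1 : (0:ℝ) ≤ Real.pi * (↑(2*m+1)) / 2 := by positivity
        rw [show (2*(m:ℝ)+1) * Real.sqrt (Real.pi * (↑(2*m+1)) / 2)
              = Real.sqrt ((2*(m:ℝ)+1)^2 * (Real.pi * (↑(2*m+1)) / 2)) by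
            rw [Real.sqrt_mul (by positivity : (0:ℝ) ≤ (2*(m:ℝ)+1)^2) (Real.pi * (↑(2*m+1)) / 2),
              Real.sqrt_sq (by positivity : (0:ℝ) ≤ 2*(m:ℝ)+1)],
          show 2*((m:ℝ)+1) * Real.sqrt (Real.pi * m)
              = Real.sqrt ((2*((m:ℝ)+1))^2 * (Real.pi * (m:ℝ))) by
            rw [Real.sqrt_mul (by positivity : (0:ℝ) ≤ (2*((m:ℝ)+1))^2) (Real.pi * (m:ℝ)),
              Real.sqrt_sq (by positivity : (0:ℝ) ≤ 2*((m:ℝ)+1))]]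
        apply Real.sqrt_le_sqrt
        push_cast
        have hpoly : (2*(m:ℝ)+1)^2 * ((2*(m:ℝ)+1)/2) ≤ (2*((m:ℝ)+1))^2 * m := by nlinarith [hm0]
        nlinarith [mul_le_mul_of_nonneg_left hpoly Real.pi_pos.le]
      have hcb := centralBinom_sqrt_le m
      have hkey : ((m:ℝ)+1) * (((2*m+1).choose m : ℝ) * Real.sqrt (Real.pi * (↑(2*m+1)) / 2))
          ≤ ((m:ℝ)+1) * 2^(2*m+1) := by
        have hchoosepos : (0:ℝ) ≤ (Nat.centralBinom m : ℝ) := by positivity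
        calc ((m:ℝ)+1) * (((2*m+1).choose m : ℝ) * Real.sqrt (Real.pi * (↑(2*m+1)) / 2))
            = ((2*(m:ℝ)+1) * Nat.centralBinom m) * Real.sqrt (Real.pi * (↑(2*m+1)) / 2) := by
              rw [← hR]; ring
          _ = (Nat.centralBinom m : ℝ) * ((2*(m:ℝ)+1) * Real.sqrt (Real.pi * (↑(2*m+1)) / 2)) := by
              ring
          _ ≤ (Nat.centralBinom m : ℝ) * (2*((m:ℝ)+1) * Real.sqrt (Real.pi * m)) :=
              mul_le_mul_of_nonneg_left hsq hchoosepos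
          _ = 2*((m:ℝ)+1) * ((Nat.centralBinom m : ℝ) * Real.sqrt (Real.pi * m)) := by ring
          _ ≤ 2*((m:ℝ)+1) * 4^m := by
              apply mul_le_mul_of_nonneg_left hcb (by positivity)
          _ = ((m:ℝ)+1) * 2^(2*m+1) := by
              rw [show (4:ℝ) = 2^2 by norm_num, ← pow_mul]
              ring
      have := le_of_mul_le_mul_left hkey (by positivity : (0:ℝ) < (m:ℝ)+1)
      exact this
  calc (n.choose k : ℝ) * Real.sqrt (Real.pi * n / 2)
      ≤ (n.choose (n/2) : ℝ) * Real.sqrt (Real.pi * n / 2) :=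
        mul_le_mul_of_nonneg_right hmid hX
    _ ≤ 2 ^ n := step

section count
variable {r n : ℕ}


variable {r n : ℕ}

lemma factor_imp {G : SimpleGraph (Fin r × Fin n)}
    (hG : ∀ x y, G.Adj x y ↔ x.1 ≠ y.1) {S : Finset (Fin r × Fin n)}
    (h : krFactorOn r G S) (i j : Fin r) :
    (S.filter fun p => p.1 = i).card = (S.filter fun p => p.1 = j).card := by
  obtain ⟨P, h1, h2, h3⟩ := h
  suffices key : ∀ i : Fin r, (S.filter fun p => p.1 = i).card = P.card by rw [key i, key j]
  intro i
  have hSU : S = P.biUnion id := by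
    apply Finset.Subset.antisymm
    · intro v hv; obtain ⟨T, hT, hvT⟩ := h3 v hv; exact Finset.mem_biUnion.mpr ⟨T, hT, hvT⟩
    · intro v hv; obtain ⟨T, hT, hvT⟩ := Finset.mem_biUnion.mp hv; exact (h1 T hT).2.1 hvT
  have hfT : ∀ T ∈ P, (T.filter fun p => p.1 = i).card = 1 := by
    intro T hT
    obtain ⟨hcard, hsub, hadj⟩ := h1 T hT
    have hinj : Set.InjOn Prod.fst (T : Set (Fin r × Fin n)) := by
      intro x hx y hy hxy
      by_contra hne
      exact ((hG x y).mp (hadj x (Finset.mem_coe.mp hx) y (Finset.mem_coe.mp hy) hne)) hxy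
    have himg : T.image Prod.fst = Finset.univ := by
      apply Finset.eq_univ_of_card
      rw [Finset.card_image_of_injOn hinj, hcard, Fintype.card_fin]
    have hiimg : i ∈ T.image Prod.fst := by rw [himg]; exact Finset.mem_univ i
    obtain ⟨a, haT, hai⟩ := Finset.mem_image.mp hiimg
    apply Finset.card_eq_one.mpr
    refine ⟨a, ?_⟩
    ext b
    simp only [Finset.mem_filter, Finset.mem_singleton]
    constructor
    · rintro ⟨hbT, hbi⟩
      exact hinj (Finset.mem_coe.mpr hbT) (Finset.mem_coe.mpr haT) (by rw [hbi, hai])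
    · rintro rfl; exact ⟨haT, hai⟩
  rw [hSU, Finset.filter_biUnion]
  simp only [id_eq]
  rw [Finset.card_biUnion (fun T hT T' hT' hne => Finset.disjoint_filter_filter (h2 T hT T' hT' hne))]
  rw [Finset.sum_congr rfl hfT]
  simp

lemma imp_factor (hr : 2 ≤ r) {G : SimpleGraph (Fin r × Fin n)}
    (hG : ∀ x y, G.Adj x y ↔ x.1 ≠ y.1) {S : Finset (Fin r × Fin n)} {k : ℕ}
    (h : ∀ i : Fin r, (S.filter fun p => p.1 = i).card = k) : krFactorOn r G S := by
  let e : ∀ i : Fin r, {x // x ∈ S.filter fun p => p.1 = i} ≃ Fin k :=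
    fun i => (Finset.filter (fun p => p.1 = i) S).equivFin.trans (finCongr (h i))
  let g : Fin r → Fin k → Fin r × Fin n := fun i j => ((e i).symm j : Fin r × Fin n)
  have hg : ∀ i j, g i j ∈ S ∧ (g i j).1 = i := by
    intro i j
    have := ((e i).symm j).2
    simpa using Finset.mem_filter.mp this
  let T : Fin k → Finset (Fin r × Fin n) := fun j => Finset.image (fun i => g i j) Finset.univ
  have hmemT : ∀ j v, v ∈ T j ↔ ∃ i, g i j = v := by
    intro j v
    simp [T]
  have hgTv : ∀ j i, g i j ∈ T j := fun j i => (hmemT j (g i j)).mpr ⟨i, rfl⟩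
  refine ⟨Finset.image T Finset.univ, ?_, ?_, ?_⟩
  · intro A hA
    obtain ⟨j, _, rfl⟩ := Finset.mem_image.mp hA
    refine ⟨?_, ?_, ?_⟩
    · rw [Finset.card_image_of_injOn, Finset.card_univ, Fintype.card_fin]
      intro i _ i' _ hii
      have := congrArg Prod.fst hii
      rw [(hg i j).2, (hg i' j).2] at this
      exact this
    · intro v hv
      obtain ⟨i, rfl⟩ := (hmemT j v).mp hv
      exact (hg i j).1
    · intro x hx y hy hxy
      obtain ⟨i, rfl⟩ := (hmemT j x).mp hx
      obtain ⟨i', rfl⟩ := (hmemT j y).mp hy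
      apply (hG _ _).mpr
      rw [(hg i j).2, (hg i' j).2]
      intro hii
      exact hxy (by rw [hii])
  · intro A hA B hB hne
    obtain ⟨j, _, rfl⟩ := Finset.mem_image.mp hA
    obtain ⟨j', _, rfl⟩ := Finset.mem_image.mp hB
    rw [Finset.disjoint_left]
    intro v hv hv'
    obtain ⟨i, rfl⟩ := (hmemT j v).mp hv
    obtain ⟨i', hgi⟩ := (hmemT j' (g i j)).mp hv'
    have hii : i' = i := by
      have := congrArg Prod.fst hgi
      rw [(hg i' j').2, (hg i j).2] at this
      exact this
    subst hii
    have : (e i').symm j' = (e i').symm j := Subtype.ext hgi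
    have hjj : j' = j := (e i').symm.injective this
    exact hne (by rw [hjj])
  · intro v hv
    have hvf : v ∈ S.filter fun p => p.1 = v.1 := Finset.mem_filter.mpr ⟨hv, rfl⟩
    refine ⟨T (e v.1 ⟨v, hvf⟩), Finset.mem_image_of_mem T (Finset.mem_univ _), ?_⟩
    have : g v.1 (e v.1 ⟨v, hvf⟩) = v := by
      simp only [g, Equiv.symm_apply_apply]
    have h2 := hgTv (e v.1 ⟨v, hvf⟩) v.1
    rw [this] at h2
    exact h2

lemma snd_injOn (S : Finset (Fin r × Fin n)) (i : Fin r) :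
    ((S.filter fun p => p.1 = i).image Prod.snd).card = (S.filter fun p => p.1 = i).card := by
  apply Finset.card_image_of_injOn
  intro x hx y hy hxy
  have hx1 : x.1 = i := (Finset.mem_filter.mp (Finset.mem_coe.mp hx)).2
  have hy1 : y.1 = i := (Finset.mem_filter.mp (Finset.mem_coe.mp hy)).2
  exact Prod.ext (by rw [hx1, hy1]) hxy

lemma card_fixed (k : ℕ) :
    ((Finset.univ : Finset (Finset (Fin r × Fin n))).filter
      (fun S => ∀ i : Fin r, (S.filter fun p => p.1 = i).card = k)).card
    = (n.choose k)^r := by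
  rw [show (n.choose k)^r = (Fintype.piFinset (fun _ : Fin r =>
      (Finset.univ : Finset (Fin n)).powersetCard k)).card by
    rw [Fintype.card_piFinset]
    simp [Finset.card_powersetCard]]
  apply Finset.card_nbij' (fun S => fun i => (S.filter fun p => p.1 = i).image Prod.snd)
    (fun f => Finset.univ.filter (fun p => p.2 ∈ f p.1))
  · -- hi
    intro S hS
    have hS' := (Finset.mem_filter.mp hS).2
    rw [Finset.mem_coe, Fintype.mem_piFinset]
    intro i
    rw [Finset.mem_powersetCard]
    exact ⟨Finset.subset_univ _, by rw [snd_injOn]; exact hS' i⟩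
  · -- hj
    intro f hf
    rw [Finset.mem_coe, Fintype.mem_piFinset] at hf
    simp only [Finset.mem_coe, Finset.mem_filter, Finset.mem_univ, true_and]
    intro i
    have hfi := (Finset.mem_powersetCard.mp (hf i)).2
    rw [← hfi]
    apply Finset.card_nbij' (fun p => p.2) (fun b => (i, b))
    · intro p hp
      simp only [Finset.mem_coe, Finset.mem_filter, Finset.mem_univ, true_and] at hp
      obtain ⟨h1, h2⟩ := hp
      rwa [← h2]
    · intro b hb
      simp only [Finset.mem_coe, Finset.mem_filter, Finset.mem_univ, true_and]
      exact ⟨hb, trivial⟩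
    · intro p hp
      simp only [Finset.mem_coe, Finset.mem_filter, Finset.mem_univ, true_and] at hp
      obtain ⟨h1, h2⟩ := hp
      rw [← h2]
    · intro b _
      rfl
  · -- left_inv
    intro S hS
    ext p
    simp only [Finset.mem_filter, Finset.mem_univ, true_and, Finset.mem_image]
    constructor
    · rintro ⟨q, ⟨hqS, hq1⟩, hq2⟩
      have : q = p := Prod.ext hq1 hq2
      rwa [← this]
    · intro hp
      exact ⟨p, ⟨hp, rfl⟩, rfl⟩
  · -- right_inv
    intro f hf
    funext i
    ext b
    simp only [Finset.mem_image, Finset.mem_filter, Finset.mem_univ, true_and]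
    constructor
    · rintro ⟨p, ⟨hp2, hp1⟩, hpb⟩
      rw [← hpb, ← hp1]
      exact hp2
    · intro hb
      exact ⟨(i, b), ⟨hb, rfl⟩, rfl⟩

lemma count_eq (hr : 2 ≤ r) :
    ((Finset.univ : Finset (Finset (Fin r × Fin n))).filter
      (fun S => ∀ i j : Fin r, (S.filter fun p => p.1 = i).card
        = (S.filter fun p => p.1 = j).card)).card
    = ∑ k ∈ Finset.range (n+1), (n.choose k)^r := by
  have i0 : Fin r := ⟨0, by omega⟩
  have hsplit : ((Finset.univ : Finset (Finset (Fin r × Fin n))).filter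
      (fun S => ∀ i j : Fin r, (S.filter fun p => p.1 = i).card
        = (S.filter fun p => p.1 = j).card))
      = (Finset.range (n+1)).biUnion (fun k =>
          (Finset.univ : Finset (Finset (Fin r × Fin n))).filter
            (fun S => ∀ i : Fin r, (S.filter fun p => p.1 = i).card = k)) := by
    ext S
    simp only [Finset.mem_filter, Finset.mem_univ, true_and, Finset.mem_biUnion,
      Finset.mem_range]
    constructor
    · intro hS
      refine ⟨(S.filter fun p => p.1 = i0).card, ?_, fun i => hS i i0⟩
      have : (S.filter fun p => p.1 = i0).card ≤ ({i0} ×ˢ (Finset.univ : Finset (Fin n))).card := by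
        apply Finset.card_le_card
        intro p hp
        obtain ⟨hpS, hp1⟩ := Finset.mem_filter.mp hp
        rw [Finset.mem_product, Finset.mem_singleton]
        exact ⟨hp1, Finset.mem_univ _⟩
      rw [Finset.card_product, Finset.card_singleton, Finset.card_univ, Fintype.card_fin,
        one_mul] at this
      omega
    · rintro ⟨k, _, hk⟩ i j
      rw [hk i, hk j]
  rw [hsplit, Finset.card_biUnion]
  · exact Finset.sum_congr rfl (fun k _ => card_fixed k)
  · intro k _ k' _ hne
    rw [Function.onFun, Finset.disjoint_left]
    intro S hS hS'
    have h1 := (Finset.mem_filter.mp hS).2 i0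
    have h2 := (Finset.mem_filter.mp hS').2 i0
    omega

end count

theorem stmt19 (r : ℕ) (hr : 2 ≤ r) :
    (∀ n : ℕ, 4 ≤ n →
      ∀ G : SimpleGraph (Fin r × Fin n), (∀ x y, G.Adj x y ↔ x.1 ≠ y.1) →
        (Nat.card {S : Finset (Fin r × Fin n) // krFactorOn r G S} =
          ∑ k ∈ Finset.range (n + 1), (n.choose k) ^ r) ∧
        ((∑ k ∈ Finset.range (n + 1), ((n.choose k : ℝ)) ^ r) ≤
          n * 2 ^ (r * n) / (Real.pi * n / 2) ^ ((r : ℝ)/2) + 1)) ∧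
    Filter.Tendsto
      (fun n : ℕ => ((∑ k ∈ Finset.range (n + 1), (n.choose k) ^ r : ℕ) : ℝ) / 2 ^ (r * n))
      Filter.atTop (nhds 0) := by
  classical
  constructor
  · intro n hn G hG
    have hn2 : 2 ≤ n := by omega
    constructor
    · -- counting
      have i0 : Fin r := ⟨0, by omega⟩
      have hiff : ∀ S : Finset (Fin r × Fin n), krFactorOn r G S ↔
          (∀ i j : Fin r, (S.filter fun p => p.1 = i).card
            = (S.filter fun p => p.1 = j).card) := by
        intro S
        constructor
        · exact fun h i j => factor_imp hG h i j
        · intro h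
          exact imp_factor hr hG (k := (S.filter fun p => p.1 = i0).card) (fun i => h i i0)
      rw [Nat.card_congr (Equiv.subtypeEquivRight hiff), Nat.card_eq_fintype_card,
        Fintype.card_subtype, count_eq hr]
    · -- part 2 bound
      have hn0 : (0:ℝ) < (n:ℝ) := by exact_mod_cast (by omega : 0 < n)
      have hb : (0:ℝ) < Real.pi * n / 2 := by positivity
      have hs : (0:ℝ) < Real.sqrt (Real.pi * n / 2) := Real.sqrt_pos.mpr hb
      have hrpow : (Real.pi * (n:ℝ) / 2) ^ ((r : ℝ)/2) = (Real.sqrt (Real.pi * n / 2))^r := by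
        rw [show ((r:ℝ)/2) = (1/2) * r by ring, Real.rpow_mul hb.le, Real.rpow_natCast,
          ← Real.sqrt_eq_rpow]
      have hterm : ∀ k, ((n.choose k:ℝ))^r ≤ 2^(r*n) / (Real.sqrt (Real.pi * n / 2))^r := by
        intro k
        rw [le_div_iff₀ (by positivity)]
        calc ((n.choose k:ℝ))^r * (Real.sqrt (Real.pi * n / 2))^r
            = ((n.choose k:ℝ) * Real.sqrt (Real.pi * n / 2))^r := (mul_pow _ _ _).symm
          _ ≤ ((2:ℝ)^n)^r := pow_le_pow_left₀ (by positivity) (choose_sqrt_le n hn2 k) r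
          _ = 2^(r*n) := by rw [← pow_mul, Nat.mul_comm]
      have hsplit : (∑ k ∈ Finset.range (n + 1), ((n.choose k : ℝ)) ^ r)
          = (∑ k ∈ Finset.range n, ((n.choose k : ℝ)) ^ r) + 1 := by
        rw [Finset.sum_range_succ, Nat.choose_self]
        norm_num
      rw [hsplit, hrpow]
      have hsum : (∑ k ∈ Finset.range n, ((n.choose k : ℝ)) ^ r)
          ≤ n * (2^(r*n) / (Real.sqrt (Real.pi * n / 2))^r) := by
        calc (∑ k ∈ Finset.range n, ((n.choose k : ℝ)) ^ r)
            ≤ ∑ _k ∈ Finset.range n, 2^(r*n) / (Real.sqrt (Real.pi * n / 2))^r :=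
              Finset.sum_le_sum (fun k _ => hterm k)
          _ = n * (2^(r*n) / (Real.sqrt (Real.pi * n / 2))^r) := by
              rw [Finset.sum_const, Finset.card_range, nsmul_eq_mul]
      have : (n:ℝ) * (2^(r*n) / (Real.sqrt (Real.pi * n / 2))^r)
          = n * 2^(r*n) / (Real.sqrt (Real.pi * n / 2))^r := by ring
      linarith [hsum]
  · -- tendsto
    obtain ⟨s, rfl⟩ : ∃ s, r = s + 1 := ⟨r - 1, by omega⟩
    have hs1 : 1 ≤ s := by omega
    apply squeeze_zero' (g := fun n : ℕ => (Real.sqrt n)⁻¹)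
    · filter_upwards with n
      positivity
    · filter_upwards [Filter.eventually_ge_atTop 2] with n hn
      have hn0 : (0:ℝ) < (n:ℝ) := by exact_mod_cast (by omega : 0 < n)
      have hb : (0:ℝ) < Real.pi * n / 2 := by positivity
      have hsn : (0:ℝ) < Real.sqrt n := Real.sqrt_pos.mpr hn0
      have hn2' : (2:ℝ) ≤ (n:ℝ) := by exact_mod_cast hn
      have hX1 : (1:ℝ) ≤ Real.sqrt (Real.pi * n / 2) := by
        rw [show (1:ℝ) = Real.sqrt 1 by rw [Real.sqrt_one]]
        apply Real.sqrt_le_sqrt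
        nlinarith [Real.pi_gt_three, hn2']
      have hXn : Real.sqrt (n:ℝ) ≤ Real.sqrt (Real.pi * n / 2) := by
        apply Real.sqrt_le_sqrt
        nlinarith [Real.pi_gt_three, hn2']
      have key : (∑ k ∈ Finset.range (n + 1), ((n.choose k : ℝ)) ^ (s+1)) * Real.sqrt n
          ≤ 2^((s+1)*n) := by
        have h1 : ∀ k ∈ Finset.range (n+1), ((n.choose k:ℝ))^(s+1) * Real.sqrt n
            ≤ ((n.choose k:ℝ)) * ((2:ℝ)^n)^s := by
          intro k _
          have hc := choose_sqrt_le n hn k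
          have hcnn : (0:ℝ) ≤ (n.choose k:ℝ) := by positivity
          have e1 : Real.sqrt (n:ℝ) ≤ (Real.sqrt (Real.pi * n / 2))^s :=
            le_trans hXn (le_self_pow₀ hX1 (by omega))
          calc ((n.choose k:ℝ))^(s+1) * Real.sqrt n
              ≤ ((n.choose k:ℝ))^(s+1) * (Real.sqrt (Real.pi * n / 2))^s :=
                mul_le_mul_of_nonneg_left e1 (by positivity)
            _ = (n.choose k:ℝ) * ((n.choose k:ℝ) * Real.sqrt (Real.pi * n / 2))^s := by
                rw [pow_succ, mul_pow]; ring
            _ ≤ (n.choose k:ℝ) * ((2:ℝ)^n)^s :=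
                mul_le_mul_of_nonneg_left (pow_le_pow_left₀ (by positivity) hc s) hcnn
        calc (∑ k ∈ Finset.range (n + 1), ((n.choose k : ℝ)) ^ (s+1)) * Real.sqrt n
            = ∑ k ∈ Finset.range (n + 1), ((n.choose k : ℝ)) ^ (s+1) * Real.sqrt n := by
              rw [Finset.sum_mul]
          _ ≤ ∑ k ∈ Finset.range (n + 1), ((n.choose k:ℝ)) * ((2:ℝ)^n)^s :=
              Finset.sum_le_sum h1
          _ = (∑ k ∈ Finset.range (n + 1), ((n.choose k:ℝ))) * ((2:ℝ)^n)^s := by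
              rw [← Finset.sum_mul]
          _ = (2:ℝ)^n * ((2:ℝ)^n)^s := by
              congr 1
              exact_mod_cast congrArg (Nat.cast : ℕ → ℝ) (Nat.sum_range_choose n)
          _ = ((2:ℝ)^n)^(s+1) := by rw [pow_succ]; ring
          _ = 2^((s+1)*n) := by rw [← pow_mul, Nat.mul_comm]
      rw [div_le_iff₀ (by positivity)]
      have hcast : ((∑ k ∈ Finset.range (n + 1), (n.choose k) ^ (s+1) : ℕ) : ℝ)
          = ∑ k ∈ Finset.range (n + 1), ((n.choose k : ℝ)) ^ (s+1) := by push_cast; rfl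
      rw [hcast]
      rw [inv_mul_eq_div, le_div_iff₀ hsn]
      exact key
    · apply Filter.Tendsto.inv_tendsto_atTop
      apply Filter.tendsto_atTop_atTop.mpr
      intro b
      refine ⟨⌈b⌉₊^2, fun a ha => ?_⟩
      have h1 : ((⌈b⌉₊:ℝ))^2 ≤ (a:ℝ) := by exact_mod_cast ha
      calc b ≤ (⌈b⌉₊:ℝ) := Nat.le_ceil b
        _ = Real.sqrt (((⌈b⌉₊:ℝ))^2) := (Real.sqrt_sq (by positivity)).symm
        _ ≤ Real.sqrt a := Real.sqrt_le_sqrt h1
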